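/- arXiv:1809.05045 — 2 statements merged into one kernel-verified Lean document; each statement's English description precedes it below -/
import Mathlib

section
/- Let Y be a real locally convex space, f : Y → (−∞, +∞] a function whose sublevel sets {y : f(y) ≤ α} are compact for every α ∈ ℝ (coercive), and M ⊆ Y a closed linear subspace. Define f̃ on the quotient Y/M by f̃(y + M) = inf_{v ∈ M} f(y + v). Then every sublevel set {u ∈ Y/M : f̃(u) ≤ α} is compact in the quotient topology; in fact S⁻(f̃, α) = ⋂_{ε>0} π_M(S⁻(f, α+ε)) where π_M is the quotient map. -/
open Submodule

/-- The induced functional on the quotient `Y ⧸ M`: `f̃(y + M) = inf_{v ∈ M} f(y + v)`,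
written as the infimum of `f` over the coset. -/
noncomputable def quotInf {Y : Type*} [AddCommGroup Y] [Module ℝ Y]
    (M : Submodule ℝ Y) (f : Y → EReal) (u : Y ⧸ M) : EReal :=
  ⨅ (y : Y) (_ : (Submodule.Quotient.mk y : Y ⧸ M) = u), f y

lemma quotInf_set_eq {Y : Type*} [AddCommGroup Y] [Module ℝ Y]
    (M : Submodule ℝ Y) (f : Y → EReal) (α : ℝ) :
    {u : Y ⧸ M | quotInf M f u ≤ (α : EReal)} =
      ⋂ ε ∈ Set.Ioi (0 : ℝ), M.mkQ '' {y : Y | f y ≤ ((α + ε : ℝ) : EReal)} := by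
  ext u
  simp only [Set.mem_setOf_eq, Set.mem_iInter, Set.mem_image, Set.mem_Ioi, Set.mem_setOf_eq,
    Submodule.mkQ_apply]
  constructor
  · intro h ε hε
    have hlt : quotInf M f u < ((α + ε : ℝ) : EReal) := by
      refine lt_of_le_of_lt h ?_
      exact_mod_cast (by linarith : α < α + ε)
    rw [quotInf] at hlt
    simp only [iInf_lt_iff] at hlt
    obtain ⟨y, hy, hfy⟩ := hlt
    exact ⟨y, hfy.le, hy⟩
  · intro h
    by_contra hc
    push_neg at hc
    obtain ⟨c, hc1, hc2⟩ := EReal.exists_between_coe_real hc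
    have hε : (0 : ℝ) < c - α := by
      have := EReal.coe_lt_coe_iff.mp hc1; linarith
    obtain ⟨y, hfy, hy⟩ := h (c - α) hε
    have : quotInf M f u ≤ f y := by
      rw [quotInf]
      exact iInf₂_le y hy
    have : quotInf M f u ≤ ((α + (c - α) : ℝ) : EReal) := this.trans hfy
    rw [show α + (c - α) = c by ring] at this
    exact absurd (this.trans_lt hc2) (lt_irrefl _)

/-- If `Y` is a real locally convex space, `f : Y → (−∞, +∞]` has compact
sublevel sets (coercive), and `M` is a closed subspace, then every sublevel set of the induced
functional `f̃` on `Y ⧸ M` is compact in the quotient topology; in fact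
`S⁻(f̃, α) = ⋂_{ε>0} π_M(S⁻(f, α+ε))`. -/
theorem quotInf_sublevel_compact
    {Y : Type*} [AddCommGroup Y] [Module ℝ Y] [TopologicalSpace Y]
    [IsTopologicalAddGroup Y] [ContinuousSMul ℝ Y] [LocallyConvexSpace ℝ Y]
    (f : Y → EReal) (hbot : ∀ y, f y ≠ ⊥)
    (hcoer : ∀ α : ℝ, IsCompact {y : Y | f y ≤ (α : EReal)})
    (M : Submodule ℝ Y) (hM : IsClosed (M : Set Y)) (α : ℝ) :
    IsCompact {u : Y ⧸ M | quotInf M f u ≤ (α : EReal)} ∧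
      {u : Y ⧸ M | quotInf M f u ≤ (α : EReal)} =
        ⋂ ε ∈ Set.Ioi (0 : ℝ), M.mkQ '' {y : Y | f y ≤ ((α + ε : ℝ) : EReal)} := by
  have heq := quotInf_set_eq M f α
  refine ⟨?_, heq⟩
  haveI : IsClosed (M : Set Y) := hM
  haveI : T3Space (Y ⧸ M) := Submodule.t3_quotient_of_isClosed M
  have hmkQ : Continuous M.mkQ := M.isOpenQuotientMap_mkQ.continuous
  have hcomp : ∀ ε : ℝ, IsCompact (M.mkQ '' {y : Y | f y ≤ ((α + ε : ℝ) : EReal)}) :=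
    fun ε => (hcoer (α + ε)).image hmkQ
  rw [heq]
  have hclosed : IsClosed (⋂ ε ∈ Set.Ioi (0 : ℝ),
      M.mkQ '' {y : Y | f y ≤ ((α + ε : ℝ) : EReal)}) := by
    refine isClosed_biInter fun ε _ => (hcomp ε).isClosed
  refine (hcomp 1).of_isClosed_subset hclosed ?_
  exact Set.biInter_subset_of_mem (by norm_num : (1:ℝ) ∈ Set.Ioi (0:ℝ))
end

section
/- Let L be a nonzero constant-coefficient differential operator with fundamental solution G, Ω ⊂ ℝ^d bounded open, and T_Ω : M(Ω) → C₀^s(Ω)* the operator μ ↦ (μ̃ ⋆ G)|_Ω (for suitable s depending on the order of G on bounded sets). Then the composition π_N ∘ T_Ω : M(Ω) → X/N is injective, where X = C₀^s(Ω)*, N = {ψ ∈ X : Lψ = 0}, and π_N is the quotient map. Consequently, the extremal points of the unit ball B_N = {u_N : ‖Lu_N‖_M ≤ 1} of the seminorm ‖L·‖_M in X/N are exactly (π_N ∘ T_Ω)(±δ_x), x ∈ Ω, i.e. the classes of ±G_x where G_x is the translate of G by x. -/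
open MeasureTheory Set
open scoped ENNReal

namespace ExtremeAux

variable {α : Type*} [MeasurableSpace α]

lemma tv_finite (s : SignedMeasure α) {A : Set α} : s.totalVariation A ≠ ∞ := by
  rw [SignedMeasure.totalVariation]
  exact measure_ne_top _ _

lemma tv_toSignedMeasure (m : Measure α) [IsFiniteMeasure m] :
    m.toSignedMeasure.totalVariation = m := by
  have h : m.toSignedMeasure =
      (⟨m, 0, Measure.MutuallySingular.zero_right⟩ :
        JordanDecomposition α).toSignedMeasure := by
    rw [JordanDecomposition.toSignedMeasure]
    simp [Measure.toSignedMeasure_zero]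
  rw [SignedMeasure.totalVariation, SignedMeasure.toJordanDecomposition_eq h]
  simp

lemma tv_smul (c : ℝ) (s : SignedMeasure α) :
    (c • s).totalVariation = ENNReal.ofReal |c| • s.totalVariation := by
  rcases le_or_gt 0 c with hc | hc
  · rw [SignedMeasure.totalVariation, SignedMeasure.toJordanDecomposition_smul_real,
      JordanDecomposition.real_smul_posPart_nonneg _ _ hc,
      JordanDecomposition.real_smul_negPart_nonneg _ _ hc,
      SignedMeasure.totalVariation, smul_add, abs_of_nonneg hc]
    rfl
  · have : c • s = -((-c) • s) := by refine VectorMeasure.ext fun B hB => ?_; simp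
    rw [this, SignedMeasure.totalVariation_neg, SignedMeasure.totalVariation,
      SignedMeasure.toJordanDecomposition_smul_real,
      JordanDecomposition.real_smul_posPart_nonneg _ _ (by linarith),
      JordanDecomposition.real_smul_negPart_nonneg _ _ (by linarith),
      SignedMeasure.totalVariation, smul_add, abs_of_neg hc]
    rfl

lemma apply_jordan (s : SignedMeasure α) {B : Set α} (hB : MeasurableSet B) :
    s B = (s.toJordanDecomposition.posPart B).toReal
      - (s.toJordanDecomposition.negPart B).toReal := by
  conv_lhs => rw [← s.toSignedMeasure_toJordanDecomposition]
  rw [JordanDecomposition.toSignedMeasure, VectorMeasure.sub_apply,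
    Measure.toSignedMeasure_apply_measurable hB, Measure.toSignedMeasure_apply_measurable hB]
  rfl

lemma abs_apply_le (s : SignedMeasure α) {B : Set α} (hB : MeasurableSet B) :
    |s B| ≤ (s.totalVariation B).toReal := by
  rw [apply_jordan s hB, SignedMeasure.totalVariation, Measure.add_apply,
    ENNReal.toReal_add (measure_ne_top _ _) (measure_ne_top _ _)]
  have h1 : (0:ℝ) ≤ (s.toJordanDecomposition.posPart B).toReal := ENNReal.toReal_nonneg
  have h2 : (0:ℝ) ≤ (s.toJordanDecomposition.negPart B).toReal := ENNReal.toReal_nonneg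
  rw [abs_le]; constructor <;> linarith

lemma tv_restrict (s : SignedMeasure α) {A : Set α} (hA : MeasurableSet A) :
    SignedMeasure.totalVariation (s.restrict A) = s.totalVariation.restrict A := by
  set p := s.toJordanDecomposition.posPart
  set n := s.toJordanDecomposition.negPart
  have hsing : p.restrict A ⟂ₘ n.restrict A :=
    s.toJordanDecomposition.mutuallySingular.mono
      Measure.restrict_le_self Measure.restrict_le_self
  have h : s.restrict A =
      (⟨p.restrict A, n.restrict A, hsing⟩ : JordanDecomposition α).toSignedMeasure := by
    refine VectorMeasure.ext fun B hB => ?_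
    rw [VectorMeasure.restrict_apply _ hA hB, JordanDecomposition.toSignedMeasure,
      VectorMeasure.sub_apply, Measure.toSignedMeasure_apply_measurable hB,
      Measure.toSignedMeasure_apply_measurable hB, measureReal_def, measureReal_def,
      Measure.restrict_apply hB,
      Measure.restrict_apply hB, apply_jordan s (hB.inter hA)]
  rw [SignedMeasure.totalVariation, SignedMeasure.toJordanDecomposition_eq h]
  simp only [SignedMeasure.totalVariation, ← Measure.restrict_add]
  rfl

lemma restrict_add_restrict_compl (s : SignedMeasure α) {A : Set α} (hA : MeasurableSet A) :
    s.restrict A + s.restrict Aᶜ = s := by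
  refine VectorMeasure.ext fun B hB => ?_
  rw [VectorMeasure.add_apply, VectorMeasure.restrict_apply _ hA hB,
    VectorMeasure.restrict_apply _ hA.compl hB,
    ← VectorMeasure.of_union (Disjoint.mono inter_subset_right inter_subset_right
      disjoint_compl_right) (hB.inter hA) (hB.inter hA.compl),
    inter_union_compl]

end ExtremeAux

namespace ExtremeAux

variable {α : Type*} [MeasurableSpace α]

lemma exists_point [MetricSpace α] [SecondCountableTopology α] [OpensMeasurableSpace α]
    (ν : Measure α) [IsFiniteMeasure ν] (h1 : ν univ = 1)
    (h01 : ∀ A : Set α, MeasurableSet A → ν A = 0 ∨ ν A = 1) :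
    ∃ x : α, ν {x}ᶜ = 0 := by
  obtain ⟨D, hDc, hDd⟩ := TopologicalSpace.exists_countable_dense α
  have key : ∀ k : ℕ, ∃ y ∈ D, ν (Metric.ball y (1/(k+1))) = 1 := by
    intro k
    by_contra h
    push_neg at h
    have hz : ∀ y ∈ D, ν (Metric.ball y (1/(k+1))) = 0 := fun y hy =>
      (h01 _ Metric.isOpen_ball.measurableSet).resolve_right (h y hy)
    have hnull : ν (⋃ y ∈ D, Metric.ball y (1/(k+1))) = 0 :=
      (measure_biUnion_null_iff hDc).2 hz
    have hcover : (univ : Set α) ⊆ ⋃ y ∈ D, Metric.ball y (1/(k+1)) := by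
      intro x _
      have hx : x ∈ closure D := hDd x
      rw [Metric.mem_closure_iff] at hx
      obtain ⟨y, hyD, hy⟩ := hx (1/(k+1)) (by positivity)
      exact mem_biUnion hyD (by rw [Metric.mem_ball]; exact hy)
    have hle : ν univ ≤ 0 := le_trans (measure_mono hcover) (le_of_eq hnull)
    rw [h1] at hle
    simp at hle
  choose y hyD hy using key
  set C := ⋂ k : ℕ, Metric.ball (y k) (1/(k+1)) with hC
  have hCc : ν Cᶜ = 0 := by
    rw [hC, compl_iInter]
    refine measure_iUnion_null fun k => ?_
    have h2 := measure_add_measure_compl (μ := ν)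
      (Metric.isOpen_ball (x := y k) (ε := 1/(k+1))).measurableSet
    rw [hy k, h1] at h2
    have h3 : (1 : ℝ≥0∞) + ν (Metric.ball (y k) (1/(k+1)))ᶜ = 1 + 0 := by
      rw [add_zero]; exact h2
    exact (ENNReal.add_right_inj ENNReal.one_ne_top).1 h3
  have hCne : ν C ≠ 0 := by
    intro h0
    have h4 := measure_union_le (μ := ν) C Cᶜ
    rw [union_compl_self, h0, hCc, h1] at h4
    simp at h4
  obtain ⟨x, hx⟩ := nonempty_of_measure_ne_zero hCne
  refine ⟨x, ?_⟩
  have hsub : C ⊆ {x} := by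
    intro a ha
    have hd : dist a x = 0 := by
      by_contra hne
      have hpos : 0 < dist a x := lt_of_le_of_ne dist_nonneg (Ne.symm hne)
      obtain ⟨k, hk⟩ := exists_nat_gt (2 / dist a x)
      have ha' : dist a (y k) < 1/(k+1) := Metric.mem_ball.1 (mem_iInter.1 ha k)
      have hx' : dist x (y k) < 1/(k+1) := Metric.mem_ball.1 (mem_iInter.1 hx k)
      have htri : dist a x ≤ dist a (y k) + dist (y k) x := dist_triangle a (y k) x
      rw [dist_comm (y k) x] at htri
      have h2 : 2/((k:ℝ)+1) < dist a x := by
        rw [div_lt_iff₀ (by positivity)]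
        rw [div_lt_iff₀ hpos] at hk
        nlinarith
      have : (2:ℝ)/((k:ℝ)+1) = 1/((k:ℝ)+1) + 1/((k:ℝ)+1) := by ring
      linarith
    exact eq_of_dist_eq_zero hd
  exact le_antisymm
    (le_trans (measure_mono (compl_subset_compl.2 hsub)) (le_of_eq hCc)) (zero_le)

lemma eq_smul_dirac [MeasurableSingletonClass α] (s : SignedMeasure α) {x : α}
    (h : s.totalVariation {x}ᶜ = 0) :
    s = s {x} • (Measure.dirac x).toSignedMeasure := by
  refine VectorMeasure.ext fun B hB => ?_
  have hnull : s (B \ {x}) = 0 := by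
    refine SignedMeasure.null_of_totalVariation_zero s ?_
    exact le_antisymm
      (le_trans (measure_mono (diff_subset_compl _ _)) (le_of_eq h)) (zero_le)
  have hsplit : s B = s (B ∩ {x}) + s (B \ {x}) := by
    rw [← VectorMeasure.of_union
      (disjoint_compl_right.mono inter_subset_right (diff_subset_compl _ _))
      (hB.inter (measurableSet_singleton x)) (hB.diff (measurableSet_singleton x)),
      inter_union_diff]
  rw [hsplit, hnull, add_zero, VectorMeasure.smul_apply,
    Measure.toSignedMeasure_apply_measurable hB, measureReal_def, Measure.dirac_apply' _ hB]
  by_cases hxB : x ∈ B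
  · rw [inter_eq_self_of_subset_right (singleton_subset_iff.2 hxB),
      indicator_of_mem hxB]
    simp
  · have hBe : B ∩ {x} = ∅ := by
      ext a; simp only [mem_inter_iff, mem_singleton_iff, mem_empty_iff_false, iff_false,
        not_and]
      rintro haB rfl; exact hxB haB
    rw [hBe, indicator_of_notMem hxB]
    simp

end ExtremeAux

namespace ExtremeAux

variable {α : Type*} [MeasurableSpace α]

lemma tv_dirac_smul (x : α) {σ : ℝ} (hσ : σ = 1 ∨ σ = -1) :
    SignedMeasure.totalVariation (σ • (Measure.dirac x).toSignedMeasure) Set.univ = 1 := by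
  rw [tv_smul, tv_toSignedMeasure]
  have h : |σ| = 1 := by rcases hσ with rfl | rfl <;> norm_num
  rw [h, Measure.smul_apply, smul_eq_mul]
  simp

lemma seg_coeff {a b c₁ c₂ σ : ℝ} (ha : 0 < a) (hb : 0 < b) (hab : a + b = 1)
    (h1 : -1 ≤ c₁ ∧ c₁ ≤ 1) (h2 : -1 ≤ c₂ ∧ c₂ ≤ 1) (hσ : σ = 1 ∨ σ = -1)
    (hv : a * c₁ + b * c₂ = σ) : c₁ = σ := by
  rcases hσ with rfl | rfl
  · have hb1 : b * c₂ ≤ b * 1 := mul_le_mul_of_nonneg_left h2.2 hb.le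
    have ha1 : a * 1 ≤ a * c₁ := by nlinarith [hb1]
    have hge := le_of_mul_le_mul_left ha1 ha
    exact le_antisymm h1.2 hge
  · have hb1 : b * (-1) ≤ b * c₂ := mul_le_mul_of_nonneg_left h2.1 hb.le
    have ha1 : a * c₁ ≤ a * (-1) := by nlinarith [hb1]
    have hle := le_of_mul_le_mul_left ha1 ha
    exact le_antisymm hle h1.1

set_option maxHeartbeats 1000000 in
theorem extremePoints_tv_ball [MetricSpace α] [SecondCountableTopology α]
    [OpensMeasurableSpace α] [MeasurableSingletonClass α] [Nonempty α] :
    Set.extremePoints ℝ {μ : SignedMeasure α | μ.totalVariation univ ≤ 1} =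
      {μ : SignedMeasure α | ∃ (x : α) (σ : ℝ), (σ = 1 ∨ σ = -1) ∧
          μ = σ • (Measure.dirac x).toSignedMeasure} := by
  have hms : ∀ x : α, MeasurableSet ({x} : Set α) := fun x => measurableSet_singleton x
  ext μ
  rw [mem_extremePoints]
  constructor
  · rintro ⟨hmem, hext⟩
    simp only [mem_setOf_eq] at hmem hext
    -- μ ≠ 0
    have hμ0 : μ ≠ 0 := by
      rintro rfl
      obtain ⟨x0⟩ := ‹Nonempty α›
      have hδ : SignedMeasure.totalVariation ((Measure.dirac x0).toSignedMeasure) univ ≤ 1 := by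
        rw [tv_toSignedMeasure]; simp
      have hδ' : SignedMeasure.totalVariation (-(Measure.dirac x0).toSignedMeasure) univ ≤ 1 := by
        rw [SignedMeasure.totalVariation_neg]; exact hδ
      have hseg : (0 : SignedMeasure α) ∈ openSegment ℝ
          ((Measure.dirac x0).toSignedMeasure) (-(Measure.dirac x0).toSignedMeasure) :=
        ⟨1/2, 1/2, by norm_num, by norm_num, by norm_num, by
          rw [smul_neg, ← sub_eq_add_neg, sub_self]⟩
      have hzero := (hext _ hδ _ hδ' hseg).1
      have hval : ((Measure.dirac x0).toSignedMeasure) univ = 1 := by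
        rw [Measure.toSignedMeasure_apply_measurable MeasurableSet.univ]; simp
      rw [hzero] at hval
      simp at hval
    -- total variation is 1
    have htv1 : SignedMeasure.totalVariation μ univ = 1 := by
      rcases eq_or_lt_of_le hmem with h | h
      · exact h
      · exfalso
        have hm0 : SignedMeasure.totalVariation μ univ ≠ 0 := by
          intro h0
          apply hμ0
          refine VectorMeasure.ext fun B hB => ?_
          have hB0 : SignedMeasure.totalVariation μ B = 0 :=
            le_antisymm (le_trans (measure_mono (subset_univ B)) h0.le) (zero_le)
          rw [SignedMeasure.null_of_totalVariation_zero μ hB0]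
          simp
        set r := (SignedMeasure.totalVariation μ univ).toReal with hr
        have hrpos : 0 < r := ENNReal.toReal_pos hm0 (tv_finite μ)
        have hball1 : SignedMeasure.totalVariation (r⁻¹ • μ) univ ≤ 1 := by
          rw [tv_smul, abs_of_nonneg (by positivity), Measure.smul_apply, smul_eq_mul]
          have h5 : SignedMeasure.totalVariation μ univ = ENNReal.ofReal r :=
            (ENNReal.ofReal_toReal (tv_finite μ)).symm
          rw [h5, ← ENNReal.ofReal_mul (by positivity), inv_mul_cancel₀ hrpos.ne',
            ENNReal.ofReal_one]
        have hrlt : r < 1 := by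
          have h6 := (ENNReal.toReal_lt_toReal (tv_finite μ) ENNReal.one_ne_top).2 h
          simpa using h6
        have hseg : μ ∈ openSegment ℝ (r⁻¹ • μ) (0 : SignedMeasure α) :=
          ⟨r, 1 - r, hrpos, by linarith, by ring, by
            rw [smul_smul, mul_inv_cancel₀ hrpos.ne', one_smul, smul_zero, add_zero]⟩
        have h0 := (hext _ hball1 _ (by
          rw [SignedMeasure.totalVariation_zero]; simp) hseg).2
        exact hμ0 h0.symm
    -- 0-1 valued
    have h01 : ∀ A : Set α, MeasurableSet A →
        SignedMeasure.totalVariation μ A = 0 ∨ SignedMeasure.totalVariation μ A = 1 := by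
      intro A hA
      by_contra hcon
      push_neg at hcon
      obtain ⟨hA0, hA1⟩ := hcon
      have hAle : SignedMeasure.totalVariation μ A ≤ 1 := htv1 ▸ measure_mono (subset_univ A)
      have hAfin : SignedMeasure.totalVariation μ A ≠ ∞ := tv_finite μ
      set t := (SignedMeasure.totalVariation μ A).toReal with ht
      have htpos : 0 < t := ENNReal.toReal_pos hA0 hAfin
      have hA_eq : SignedMeasure.totalVariation μ A = ENNReal.ofReal t :=
        (ENNReal.ofReal_toReal hAfin).symm
      have htlt : t < 1 := by
        rcases lt_or_eq_of_le hAle with h | h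
        · have h6 := (ENNReal.toReal_lt_toReal hAfin ENNReal.one_ne_top).2 h
          simpa using h6
        · exact absurd h hA1
      have hcompl : SignedMeasure.totalVariation μ Aᶜ = ENNReal.ofReal (1 - t) := by
        have hadd := measure_add_measure_compl (μ := SignedMeasure.totalVariation μ) hA
        rw [htv1, hA_eq] at hadd
        have h7 : ENNReal.ofReal t + ENNReal.ofReal (1 - t) = 1 := by
          rw [← ENNReal.ofReal_add (by positivity) (by linarith)]
          norm_num
        exact (ENNReal.add_right_inj ENNReal.ofReal_ne_top).1 (hadd.trans h7.symm)
      set μ₁ := t⁻¹ • μ.restrict A with hμ₁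
      set μ₂ := (1-t)⁻¹ • μ.restrict Aᶜ with hμ₂
      have hb₁ : SignedMeasure.totalVariation μ₁ univ ≤ 1 := by
        rw [hμ₁, tv_smul, abs_of_nonneg (by positivity), Measure.smul_apply, smul_eq_mul,
          tv_restrict μ hA, Measure.restrict_apply_univ, hA_eq,
          ← ENNReal.ofReal_mul (by positivity), inv_mul_cancel₀ htpos.ne', ENNReal.ofReal_one]
      have h1t : (0:ℝ) < 1 - t := by linarith
      have hb₂ : SignedMeasure.totalVariation μ₂ univ ≤ 1 := by
        rw [hμ₂, tv_smul, abs_of_nonneg (by positivity), Measure.smul_apply, smul_eq_mul,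
          tv_restrict μ hA.compl, Measure.restrict_apply_univ, hcompl,
          ← ENNReal.ofReal_mul (by positivity), inv_mul_cancel₀ (by linarith : (1:ℝ) - t ≠ 0),
          ENNReal.ofReal_one]
      have hseg : μ ∈ openSegment ℝ μ₁ μ₂ :=
        ⟨t, 1 - t, htpos, by linarith, by ring, by
          rw [hμ₁, hμ₂, smul_smul, smul_smul, mul_inv_cancel₀ htpos.ne',
            mul_inv_cancel₀ (by linarith : (1:ℝ) - t ≠ 0), one_smul, one_smul,
            restrict_add_restrict_compl μ hA]⟩
      have h1 := (hext _ hb₁ _ hb₂ hseg).1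
      have hcontra : SignedMeasure.totalVariation μ Aᶜ = 0 := by
        conv_lhs => rw [← h1]
        rw [hμ₁, tv_smul, Measure.smul_apply, smul_eq_mul, tv_restrict μ hA,
          Measure.restrict_apply hA.compl, compl_inter_self, measure_empty, mul_zero]
      rw [hcompl] at hcontra
      have h8 : (1:ℝ) - t ≤ 0 := ENNReal.ofReal_eq_zero.1 hcontra
      linarith
    haveI : IsFiniteMeasure (SignedMeasure.totalVariation μ) :=
      ⟨by rw [htv1]; exact ENNReal.one_lt_top⟩
    obtain ⟨x, hx⟩ := exists_point (SignedMeasure.totalVariation μ) htv1 h01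
    have hμx := eq_smul_dirac μ hx
    have habs : |μ {x}| = 1 := by
      have h2 : SignedMeasure.totalVariation
          (μ {x} • (Measure.dirac x).toSignedMeasure) univ = 1 := by
        rw [← hμx]; exact htv1
      rw [tv_smul, tv_toSignedMeasure, Measure.smul_apply, smul_eq_mul] at h2
      simp only [measure_univ, mul_one] at h2
      exact ENNReal.ofReal_eq_one.1 h2
    exact ⟨x, μ {x}, (abs_eq (by norm_num)).1 habs, hμx⟩
  · rintro ⟨x, σ, hσ, rfl⟩
    have habsσ : |σ| = 1 := by rcases hσ with rfl | rfl <;> norm_num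
    have habs_le : ∀ μ' : SignedMeasure α,
        SignedMeasure.totalVariation μ' univ ≤ 1 → |μ' {x}| ≤ 1 := by
      intro μ' hb
      have h := abs_apply_le μ' (hms x)
      have h5 : SignedMeasure.totalVariation μ' {x} ≤ 1 :=
        le_trans (measure_mono (subset_univ _)) hb
      have h4 : (SignedMeasure.totalVariation μ' {x}).toReal ≤ 1 := by
        simpa using ENNReal.toReal_mono ENNReal.one_ne_top h5
      linarith
    have key : ∀ μ' : SignedMeasure α, SignedMeasure.totalVariation μ' univ ≤ 1 →
        μ' {x} = σ → μ' = σ • (Measure.dirac x).toSignedMeasure := by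
      intro μ' hball hvx
      have h1le : (1:ℝ) ≤ (SignedMeasure.totalVariation μ' {x}).toReal := by
        have h := abs_apply_le μ' (hms x)
        rw [hvx, habsσ] at h
        exact h
      have hxle : SignedMeasure.totalVariation μ' {x} ≤ 1 :=
        le_trans (measure_mono (subset_univ _)) hball
      have hfine : SignedMeasure.totalVariation μ' {x} ≠ ∞ := tv_finite μ'
      have hx1 : SignedMeasure.totalVariation μ' {x} = 1 := by
        have h4 : (SignedMeasure.totalVariation μ' {x}).toReal ≤ 1 := by
          simpa using ENNReal.toReal_mono ENNReal.one_ne_top hxle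
        have h5 : (SignedMeasure.totalVariation μ' {x}).toReal = 1 := le_antisymm h4 h1le
        rw [← ENNReal.ofReal_toReal hfine, h5, ENNReal.ofReal_one]
      have hcompl : SignedMeasure.totalVariation μ' {x}ᶜ = 0 := by
        have hadd := measure_add_measure_compl
          (μ := SignedMeasure.totalVariation μ') (hms x)
        rw [hx1] at hadd
        have h6 : (1:ℝ≥0∞) + SignedMeasure.totalVariation μ' {x}ᶜ ≤ 1 + 0 := by
          rw [add_zero, hadd]; exact hball
        exact le_antisymm ((ENNReal.add_le_add_iff_left ENNReal.one_ne_top).1 h6) (zero_le)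
      have h7 := eq_smul_dirac μ' hcompl
      rw [hvx] at h7
      exact h7
    refine ⟨le_of_eq (tv_dirac_smul x hσ), ?_⟩
    intro μ₁ h₁ μ₂ h₂ hseg
    simp only [mem_setOf_eq] at h₁ h₂
    obtain ⟨a, b, ha, hb, hab, habμ⟩ := hseg
    have hvals : a * μ₁ {x} + b * μ₂ {x} = σ := by
      have h := congrArg (fun v : SignedMeasure α => v {x}) habμ
      simp only [VectorMeasure.add_apply, VectorMeasure.smul_apply, smul_eq_mul] at h
      rw [h, Measure.toSignedMeasure_apply_measurable (hms x), measureReal_def,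
        Measure.dirac_apply_of_mem (mem_singleton x)]
      simp
    have hc₁ := habs_le μ₁ h₁
    have hc₂ := habs_le μ₂ h₂
    rw [abs_le] at hc₁ hc₂
    have hc₁σ : μ₁ {x} = σ := seg_coeff ha hb hab hc₁ hc₂ hσ hvals
    have hc₂σ : μ₂ {x} = σ := seg_coeff hb ha (by linarith) hc₂ hc₁ hσ (by linarith)
    exact ⟨key μ₁ h₁ hc₁σ, key μ₂ h₂ hc₂σ⟩

end ExtremeAux

namespace ExtremeAux

lemma extremePoints_image_linear {E F : Type*} [AddCommGroup E] [Module ℝ E]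
    [AddCommGroup F] [Module ℝ F] (f : E →ₗ[ℝ] F) (hf : Function.Injective f) (s : Set E) :
    Set.extremePoints ℝ (f '' s) = f '' Set.extremePoints ℝ s := by
  have himg : ∀ x y : E, f '' openSegment ℝ x y = openSegment ℝ (f x) (f y) := fun x y =>
    image_openSegment _ f.toAffineMap x y
  ext b
  simp only [mem_extremePoints]
  constructor
  · rintro ⟨⟨a, ha, rfl⟩, hext⟩
    refine ⟨a, ⟨ha, ?_⟩, rfl⟩
    intro a₁ h₁ a₂ h₂ hseg
    have hseg' : f a ∈ openSegment ℝ (f a₁) (f a₂) := by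
      rw [← himg]; exact mem_image_of_mem f hseg
    obtain ⟨e₁, e₂⟩ := hext _ (mem_image_of_mem f h₁) _ (mem_image_of_mem f h₂) hseg'
    exact hf e₁
  · rintro ⟨a, ⟨ha, hext⟩, rfl⟩
    refine ⟨mem_image_of_mem f ha, ?_⟩
    rintro y₁ ⟨a₁, h₁, rfl⟩ y₂ ⟨a₂, h₂, rfl⟩ hseg
    rw [← himg] at hseg
    obtain ⟨z, hz, hzf⟩ := hseg
    have hz' : z = a := hf hzf
    subst hz'
    obtain ⟨e₁, e₂⟩ := (mem_extremePoints.1 ⟨ha, hext⟩).2 _ h₁ _ h₂ hz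
    rw [e₁, e₂]
    exact ⟨rfl, rfl⟩

end ExtremeAux

open ExtremeAux in
/-- Abstract setting of Theorem 4.9: `X` stands for `C₀^s(Ω)*`, `Y` for the
distributions receiving `L u`, `j` is the (injective) embedding of the finite signed Radon
measures `M(Ω)` into `Y`, and `T : M(Ω) → X` (standing for `μ ↦ (μ̃ ⋆ G)|_Ω`) satisfies
`L(Tμ) = μ`.  With `N = ker L` and `π_N` the quotient map, `π_N ∘ T` is injective and the
extreme points of the unit ball `B_N = π_N {u : ‖Lu‖_M ≤ 1}` of the seminorm `‖L·‖_M` in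
`X/N` are exactly the classes `(π_N ∘ T)(±δ_x) = ±G_x + N`, `x ∈ Ω`. -/
theorem extremePoints_ball_diffop
    {d : ℕ} (Ω : Set (EuclideanSpace ℝ (Fin d)))
    (hΩo : IsOpen Ω) (hΩne : Ω.Nonempty) (hΩb : Bornology.IsBounded Ω)
    {X Y : Type*} [AddCommGroup X] [Module ℝ X] [AddCommGroup Y] [Module ℝ Y]
    (L : X →ₗ[ℝ] Y)
    (j : SignedMeasure Ω →ₗ[ℝ] Y) (hj : Function.Injective j)
    (T : SignedMeasure Ω →ₗ[ℝ] X) (hT : ∀ μ : SignedMeasure Ω, L (T μ) = j μ)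
    (N : Submodule ℝ X) (hN : N = LinearMap.ker L) :
    Function.Injective (N.mkQ ∘ₗ T) ∧
      Set.extremePoints ℝ (N.mkQ ''
          {u : X | ∃ μ : SignedMeasure Ω, L u = j μ ∧ μ.totalVariation Set.univ ≤ 1}) =
        (N.mkQ ∘ₗ T) '' {μ : SignedMeasure Ω | ∃ (x : Ω) (σ : ℝ), (σ = 1 ∨ σ = -1) ∧
          μ = σ • (MeasureTheory.Measure.dirac x).toSignedMeasure} := by
  haveI : Nonempty Ω := hΩne.to_subtype
  have hf : Function.Injective (N.mkQ ∘ₗ T) := by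
    intro μ₁ μ₂ h
    have h' : T μ₁ - T μ₂ ∈ N := (Submodule.Quotient.eq N).1 h
    rw [hN, LinearMap.mem_ker, map_sub, sub_eq_zero, hT, hT] at h'
    exact hj h'
  refine ⟨hf, ?_⟩
  have himage : N.mkQ ''
      {u : X | ∃ μ : SignedMeasure Ω, L u = j μ ∧ μ.totalVariation Set.univ ≤ 1} =
      (N.mkQ ∘ₗ T) '' {μ : SignedMeasure Ω | μ.totalVariation Set.univ ≤ 1} := by
    ext v
    constructor
    · rintro ⟨u, ⟨μ, hLu, hμ⟩, rfl⟩
      refine ⟨μ, hμ, ?_⟩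
      simp only [LinearMap.coe_comp, Function.comp_apply, Submodule.mkQ_apply]
      rw [eq_comm, Submodule.Quotient.eq, hN, LinearMap.mem_ker, map_sub, hLu, hT, sub_self]
    · rintro ⟨μ, hμ, rfl⟩
      exact ⟨T μ, ⟨μ, hT μ, hμ⟩, rfl⟩
  rw [himage, extremePoints_image_linear _ hf, extremePoints_tv_ball]
end
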